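/- Let B be a nontrivial simple 𝔟-module lying in the category O_𝔟 and let r = ord_𝔟(B). Then the action of d_r on B is bijective. -/
import Mathlib


/-- A representation of the Witt algebra `𝔚 = span{d_i : i ≥ -1}`, encoded by the family of
operators `d i` (only the indices `i ≥ -1` are relevant) satisfying
`[d_m, d_n] = (n - m) d_{m+n}`. -/
structure WittRep (W : Type*) [AddCommGroup W] [Module ℂ W] where
  d : ℤ → W →ₗ[ℂ] W
  comm : ∀ m n : ℤ, -1 ≤ m → -1 ≤ n →
    d m ∘ₗ d n - d n ∘ₗ d m = (((n - m : ℤ) : ℂ)) • d (m + n)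

namespace WittRep

variable {W : Type*} [AddCommGroup W] [Module ℂ W]

/-- Condition A : the module lies in the category `O_𝔚`. -/
def InO (ρ : WittRep W) : Prop :=
  ∀ v : W, ∃ n : ℕ, ∀ i : ℤ, (n : ℤ) ≤ i → ρ.d i v = 0

/-- The module is trivial: the Lie algebra acts by zero. -/
def IsTrivial (ρ : WittRep W) : Prop := ∀ i : ℤ, -1 ≤ i → ρ.d i = 0

/-- A `𝔚`-submodule. -/
def Invariant (ρ : WittRep W) (U : Submodule ℂ W) : Prop :=
  ∀ i : ℤ, -1 ≤ i → ∀ u ∈ U, ρ.d i u ∈ U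

/-- Simplicity of a `𝔚`-module. -/
def IsSimple (ρ : WittRep W) : Prop :=
  (∃ v : W, v ≠ 0) ∧ ∀ U : Submodule ℂ W, ρ.Invariant U → U = ⊥ ∨ U = ⊤

/-- A `𝔟`-submodule (`𝔟 = span{d_i : i ≥ 0}`). -/
def BInvariant (ρ : WittRep W) (U : Submodule ℂ W) : Prop :=
  ∀ i : ℤ, 0 ≤ i → ∀ u ∈ U, ρ.d i u ∈ U

/-- The socle `Soc_𝔟(W)`: the sum of the minimal nonzero `𝔟`-submodules. -/
def Soc (ρ : WittRep W) : Submodule ℂ W :=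
  sSup {U | ρ.BInvariant U ∧ U ≠ ⊥ ∧
    ∀ U' : Submodule ℂ W, ρ.BInvariant U' → U' ≠ ⊥ → U' ≤ U → U' = U}

/-- `w₀` is a highest weight vector of weight `b'`. -/
def IsHW (ρ : WittRep W) (w₀ : W) (b' : ℂ) : Prop :=
  w₀ ≠ 0 ∧ ρ.d 0 w₀ = b' • w₀ ∧ ∀ i : ℤ, 1 ≤ i → ρ.d i w₀ = 0

/-- `w₀` generates the `𝔚`-module. -/
def Generates (ρ : WittRep W) (w₀ : W) : Prop :=
  ∀ U : Submodule ℂ W, ρ.Invariant U → w₀ ∈ U → U = ⊤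

/-- The operator `e^{kt} d/dt = Σ_{i ≥ 0} (k^i/i!) d_{i-1}` (a finite sum on each vector of a
module in `O_𝔚`). -/
noncomputable def E (ρ : WittRep W) (k : ℤ) (w : W) : W :=
  ∑ᶠ i : ℕ, (((k : ℂ) ^ i) / (Nat.factorial i : ℂ)) • ρ.d ((i : ℤ) - 1) w

/-- The action of `d_k` on `L(W, λ, a, b) = W ⊗ ℂ[t, t⁻¹]`, realized on `ℤ →₀ W`
(`w ⊗ t^j ↦ Finsupp.single j w`):
`d_k · (w ⊗ t^j) = ((λ^k e^{kt} − 1) d/dt + a + kb + j) w ⊗ t^{k+j}`. -/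
noncomputable def Lact (ρ : WittRep W) (lam a b : ℂ) (k : ℤ) (f : ℤ →₀ W) : ℤ →₀ W :=
  f.sum fun j w => Finsupp.single (k + j)
    (lam ^ k • ρ.E k w - ρ.d (-1) w + (a + (k : ℂ) * b + (j : ℂ)) • w)

/-- The PBW map `ℕ →₀ ℂ → W`, `(k, c) ↦ c • d_{-1}^k w₀`. -/
noncomputable def pbwMap (ρ : WittRep W) (w₀ : W) : (ℕ →₀ ℂ) →ₗ[ℂ] W :=
  Finsupp.lsum ℂ fun k : ℕ => ((ρ.d (-1)) ^ k) ∘ₗ LinearMap.toSpanSingleton ℂ W w₀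

/-- `W` is the Verma `𝔚`-module with highest weight vector `w₀` of highest weight `b'`. -/
def IsVerma (ρ : WittRep W) (w₀ : W) (b' : ℂ) : Prop :=
  ρ.d 0 w₀ = b' • w₀ ∧ (∀ i : ℤ, 1 ≤ i → ρ.d i w₀ = 0) ∧
    Function.Bijective (ρ.pbwMap w₀)

/-- `W^{(n)} = Σ_{i=0}^n d_{-1}^i (Soc_𝔟 W)`. -/
noncomputable def Wn (ρ : WittRep W) (n : ℕ) : Submodule ℂ W :=
  ⨆ i : Fin (n + 1), Submodule.map ((ρ.d (-1)) ^ (i : ℕ)) ρ.Soc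

/-- `L₀(a, b') = span{d₁^i · (w₀ ⊗ t^{2j})} ⊆ L(W, -1, a, b' + 1)`. -/
noncomputable def Lzero (ρ : WittRep W) (a b' : ℂ) (w₀ : W) : Submodule ℂ (ℤ →₀ W) :=
  Submodule.span ℂ
    {g | ∃ (i : ℕ) (j : ℤ), g = (ρ.Lact (-1) a (b' + 1) 1)^[i] (Finsupp.single (2 * j) w₀)}

/-- `L₁(a, b') = span{d₁^i · (w₀ ⊗ t^{2j+1})} ⊆ L(W, -1, a, b' + 1)`. -/
noncomputable def Lone (ρ : WittRep W) (a b' : ℂ) (w₀ : W) : Submodule ℂ (ℤ →₀ W) :=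
  Submodule.span ℂ
    {g | ∃ (i : ℕ) (j : ℤ), g = (ρ.Lact (-1) a (b' + 1) 1)^[i] (Finsupp.single (2 * j + 1) w₀)}

end WittRep

/-- A representation of the Lie algebra `𝔟 = span{d_i : i ≥ 0}`. -/
structure BRep (B : Type*) [AddCommGroup B] [Module ℂ B] where
  d : ℕ → B →ₗ[ℂ] B
  comm : ∀ m n : ℕ, d m ∘ₗ d n - d n ∘ₗ d m = (((n : ℂ) - (m : ℂ))) • d (m + n)

namespace BRep

variable {B : Type*} [AddCommGroup B] [Module ℂ B]

/-- Condition A : the module lies in the category `O_𝔟`. -/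
def InO (ρ : BRep B) : Prop := ∀ v : B, ∃ n : ℕ, ∀ i : ℕ, n ≤ i → ρ.d i v = 0

def IsTrivial (ρ : BRep B) : Prop := ∀ i : ℕ, ρ.d i = 0

def IsSimple (ρ : BRep B) : Prop :=
  (∃ v : B, v ≠ 0) ∧
    ∀ U : Submodule ℂ B, (∀ i : ℕ, ∀ u ∈ U, ρ.d i u ∈ U) → U = ⊥ ∨ U = ⊤

/-- The set of `r ∈ ℤ≥0` such that `d_{r+i} v = 0` for all `i ≥ 1`;
`ord_𝔟(v)` is its least element. -/
def ordSet (ρ : BRep B) (v : B) : Set ℕ := {r : ℕ | ∀ i : ℕ, r + 1 ≤ i → ρ.d i v = 0}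

/-- The action of `d_m` on the Virasoro module `N(B_(c), a) = B ⊗ ℂ[t, t⁻¹]`, realized on
`ℤ →₀ B`:  `d_m · (w ⊗ t^j) = (Σ_{i≥1} (m^i/i!) d_{i-1} + mc + a + j) w ⊗ t^{m+j}`
(`c` is the twist of the `d₀`-action; `c = 0` gives `N(B, a)`). -/
noncomputable def Nact (ρ : BRep B) (a c : ℂ) (m : ℤ) (f : ℤ →₀ B) : ℤ →₀ B :=
  f.sum fun j w => Finsupp.single (m + j)
    ((∑ᶠ i : ℕ, (((m : ℂ) ^ (i + 1)) / (Nat.factorial (i + 1) : ℂ)) • ρ.d i w) +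
      ((m : ℂ) * c + a + (j : ℂ)) • w)

end BRep

/-- For a family `U : ℤ → Submodule ℂ W`, the subspace `⊕_j U j ⊗ t^j` of `W ⊗ ℂ[t,t⁻¹]`. -/
def gradedSub {W : Type*} [AddCommGroup W] [Module ℂ W] (U : ℤ → Submodule ℂ W) :
    Submodule ℂ (ℤ →₀ W) where
  carrier := {f | ∀ j, f j ∈ U j}
  add_mem' := fun hf hg j => by
    simpa only [Finsupp.add_apply] using (U j).add_mem (hf j) (hg j)
  zero_mem' := fun j => by simp
  smul_mem' := fun c f hf j => by
    simpa only [Finsupp.smul_apply] using (U j).smul_mem c (hf j)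

/-- A submodule invariant under a (ℤ-indexed) family of operators. -/
def ActInvariant {V : Type*} [AddCommGroup V] [Module ℂ V] (act : ℤ → V → V)
    (M : Submodule ℂ V) : Prop :=
  ∀ k : ℤ, ∀ u ∈ M, act k u ∈ M

/-- Simplicity of the module given by a family of operators (the central element acts by zero). -/
def ActSimple {V : Type*} [AddCommGroup V] [Module ℂ V] (act : ℤ → V → V) : Prop :=
  (∃ v : V, v ≠ 0) ∧ ∀ M : Submodule ℂ V, ActInvariant act M → M = ⊥ ∨ M = ⊤

/-- A representation of the Virasoro algebra. -/
structure VirasoroRep (V : Type*) [AddCommGroup V] [Module ℂ V] where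
  d : ℤ → V →ₗ[ℂ] V
  z : V →ₗ[ℂ] V
  comm : ∀ m n : ℤ, d m ∘ₗ d n - d n ∘ₗ d m =
    (((n - m : ℤ) : ℂ)) • d (m + n) +
      (if m + n = 0 then (((n : ℂ) ^ 3 - (n : ℂ)) / 12) else 0) • z
  comm_z : ∀ m : ℤ, d m ∘ₗ z = z ∘ₗ d m

namespace BRep

variable {B : Type*} [AddCommGroup B] [Module ℂ B]

lemma comm_apply (ρ : BRep B) (m n : ℕ) (w : B) :
    ρ.d m (ρ.d n w) - ρ.d n (ρ.d m w) = (((n : ℂ) - (m : ℂ))) • ρ.d (m + n) w := by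
  have h := congrArg (fun L : B →ₗ[ℂ] B => L w) (ρ.comm m n)
  simpa using h

/-- The subspace annihilated by all `d_i`, `i ≥ s`. -/
def ann (ρ : BRep B) (s : ℕ) : Submodule ℂ B where
  carrier := {w | ∀ i : ℕ, s ≤ i → ρ.d i w = 0}
  add_mem' := fun hf hg i hi => by
    simp [map_add, hf i hi, hg i hi]
  zero_mem' := fun i _ => by simp
  smul_mem' := fun c w hw i hi => by
    simp [map_smul, hw i hi]

lemma mem_ann {ρ : BRep B} {s : ℕ} {w : B} :
    w ∈ ρ.ann s ↔ ∀ i : ℕ, s ≤ i → ρ.d i w = 0 := Iff.rfl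

lemma ann_invariant (ρ : BRep B) (s : ℕ) :
    ∀ j : ℕ, ∀ u ∈ ρ.ann s, ρ.d j u ∈ ρ.ann s := by
  intro j u hu i hi
  have h := ρ.comm_apply j i u
  rw [hu i hi, map_zero, hu (j + i) (le_trans hi (Nat.le_add_left i j)), smul_zero,
    zero_sub, neg_eq_zero] at h
  exact h

end BRep

theorem stmt1 {B : Type*} [AddCommGroup B] [Module ℂ B] (ρ : BRep B)
    (hO : ρ.InO) (hs : ρ.IsSimple) (hnt : ¬ ρ.IsTrivial)
    (r : ℕ) (hr : ∃ v : B, v ≠ 0 ∧ IsLeast (ρ.ordSet v) r) :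
    Function.Bijective (ρ.d r) := by
  obtain ⟨v, hv, hmem, hmin⟩ := hr
  -- K = ann (r+1) is a nonzero submodule, hence ⊤.
  have hK : ρ.ann (r + 1) = ⊤ := by
    rcases hs.2 (ρ.ann (r + 1)) (ρ.ann_invariant (r + 1)) with h | h
    · exfalso
      have : v ∈ ρ.ann (r + 1) := fun i hi => hmem i hi
      rw [h, Submodule.mem_bot] at this
      exact hv this
    · exact h
  have hKall : ∀ w : B, ∀ i : ℕ, r + 1 ≤ i → ρ.d i w = 0 := by
    intro w
    have : w ∈ ρ.ann (r + 1) := hK ▸ Submodule.mem_top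
    exact this
  -- Z = ann r is a proper submodule, hence ⊥.
  have hZ : ρ.ann r = ⊥ := by
    rcases hs.2 (ρ.ann r) (ρ.ann_invariant r) with h | h
    · exact h
    · exfalso
      have hall : ∀ w : B, ∀ i : ℕ, r ≤ i → ρ.d i w = 0 := by
        intro w
        have : w ∈ ρ.ann r := h ▸ Submodule.mem_top
        exact this
      cases r with
      | zero =>
          exact hnt fun i => LinearMap.ext fun w => hall w i (Nat.zero_le i)
      | succ k =>
          have : k ∈ ρ.ordSet v := fun i hi => hall v i hi
          have := hmin this
          omega
  -- d r ≠ 0.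
  have hdr : ρ.d r ≠ 0 := by
    intro h0
    have : v ∈ ρ.ann r := by
      intro i hi
      rcases eq_or_lt_of_le hi with rfl | hlt
      · rw [h0]; rfl
      · exact hmem i hlt
    rw [hZ, Submodule.mem_bot] at this
    exact hv this
  constructor
  · -- injectivity
    rw [← LinearMap.ker_eq_bot]
    rw [eq_bot_iff]
    intro w hw
    have hw' : ρ.d r w = 0 := hw
    have : w ∈ ρ.ann r := by
      intro i hi
      rcases eq_or_lt_of_le hi with rfl | hlt
      · exact hw'
      · exact hKall w i hlt
    rw [hZ] at this
    exact this
  · -- surjectivity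
    have hRinv : ∀ j : ℕ, ∀ u ∈ LinearMap.range (ρ.d r), ρ.d j u ∈ LinearMap.range (ρ.d r) := by
      intro j u hu
      obtain ⟨w, rfl⟩ := hu
      cases j with
      | zero =>
          refine ⟨ρ.d 0 w + (r : ℂ) • w, ?_⟩
          have h := eq_add_of_sub_eq (ρ.comm_apply 0 r w)
          simp only [Nat.cast_zero, sub_zero, Nat.zero_add, zero_add] at h
          rw [map_add, map_smul]
          rw [add_comm]
          exact h.symm
      | succ k =>
          refine ⟨ρ.d (k + 1) w, ?_⟩
          have h := ρ.comm_apply (k + 1) r w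
          have hz : ρ.d (k + 1 + r) w = 0 := hKall w _ (by omega)
          rw [hz, smul_zero, sub_eq_zero] at h
          exact h.symm
    have hR : LinearMap.range (ρ.d r) = ⊤ := by
      rcases hs.2 (LinearMap.range (ρ.d r)) hRinv with h | h
      · exact absurd (LinearMap.range_eq_bot.mp h) hdr
      · exact h
    exact LinearMap.range_eq_top.mp hR
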